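/- Let R be a finite commutative local ring with maximal ideal m, |R| = 2^n with n ≥ 3, m^{n−1} ≠ 0, and U(R) ≅ C_2^{n−1}. Then m = (2) and R ≅ Z/2^n Z. -/

import Mathlib

/-- A list (sequence) in a commutative monoid is reducible if a proper
subsequence has the same product. -/
def Reducible {M : Type*} [CommMonoid M] (A : List M) : Prop :=
  ∃ B : List M, List.Sublist B A ∧ B.length < A.length ∧ B.prod = A.prod

/-- The Davenport constant: the least positive `n` such that every sequence of
length `n` is reducible (`⊤` if none exists). -/
noncomputable def davenport (M : Type*) [CommMonoid M] : ℕ∞ :=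
  sInf {k : ℕ∞ | ∃ n : ℕ, k = n ∧ 0 < n ∧ ∀ A : List M, A.length = n → Reducible A}

/-- An ideal of a commutative monoid. -/
def IsMulIdeal {M : Type*} [CommMonoid M] (T : Set M) : Prop :=
  ∀ s t : M, t ∈ T → s * t ∈ T

/-- The relative Davenport constant `D(S, T)`: the least positive `n` such
that every sequence of length `n` with product in `T` is reducible. -/
noncomputable def davenportRel (M : Type*) [CommMonoid M] (T : Set M) : ℕ∞ :=
  sInf {k : ℕ∞ | ∃ n : ℕ, k = n ∧ 0 < n ∧
    ∀ A : List M, A.length = n → A.prod ∈ T → Reducible A}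

/-- `(S, T)` is a unit-stabilized pair. -/
def UnitStabilizedPair (M : Type*) [CommMonoid M] (T : Set M) : Prop :=
  ∀ a b : M, a * b ∉ T →
    {u : Mˣ | (u : M) * a = a} = {u : Mˣ | (u : M) * (a * b) = a * b} →
    ∃ u : Mˣ, a * b = a * u


open IsLocalRing

section Aux

set_option linter.unusedSectionVars false

variable {R : Type*} [CommRing R] [IsLocalRing R] [Finite R]

private lemma aux_ideal_eq_of_le_of_card_le {I J : Ideal R} (h : I ≤ J)
    (hc : Nat.card ↥J ≤ Nat.card ↥I) : I = J := by
  have := Set.eq_of_subset_of_ncard_le (show (I : Set R) ⊆ J from h) ?_ (Set.toFinite _)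
  · exact SetLike.ext' this
  · rw [← Nat.card_coe_set_eq, ← Nat.card_coe_set_eq]; exact hc

private lemma aux_card_dvd {I J : Ideal R} (h : I ≤ J) : Nat.card ↥I ∣ Nat.card ↥J :=
  AddSubgroup.card_dvd_of_le (H := I.toAddSubgroup) (K := J.toAddSubgroup) h

private lemma aux_double {I J : Ideal R} (h : I ≤ J) (hne : I ≠ J) :
    2 * Nat.card ↥I ≤ Nat.card ↥J := by
  obtain ⟨k, hk⟩ := aux_card_dvd h
  have hIpos : 0 < Nat.card ↥I := Nat.card_pos
  have hJpos : 0 < Nat.card ↥J := Nat.card_pos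
  rcases Nat.lt_or_ge k 2 with hk2 | hk2
  · interval_cases k
    · omega
    · exact absurd (aux_ideal_eq_of_le_of_card_le h (by omega)) hne
  · calc 2 * Nat.card ↥I ≤ Nat.card ↥I * k := by nlinarith
    _ = Nat.card ↥J := hk.symm

private lemma aux_card_m_add_units :
    Nat.card ↥(maximalIdeal R) + Nat.card Rˣ = Nat.card R := by
  classical
  have e : Rˣ ≃ {x : R // IsUnit x} :=
    ⟨fun u => ⟨u, u.isUnit⟩, fun x => x.2.unit, fun u => Units.ext rfl, fun x => by ext; simp⟩
  rw [Nat.card_congr e]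
  have hcompl : ({x : R | IsUnit x} : Set R) = (maximalIdeal R : Set R)ᶜ := by
    ext x; simp [IsLocalRing.mem_maximalIdeal, mem_nonunits_iff]
  have h2 := Set.ncard_add_ncard_compl (maximalIdeal R : Set R) (Set.toFinite _) (Set.toFinite _)
  have hc : Nat.card {x : R // IsUnit x} = ({x : R | IsUnit x} : Set R).ncard :=
    Nat.card_coe_set_eq _
  have hmm : Nat.card ↥(maximalIdeal R) = (maximalIdeal R : Set R).ncard :=
    Nat.card_coe_set_eq _
  rw [hc, hmm, hcompl, h2]

private lemma aux_span_of_sup (t : R)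
    (h : maximalIdeal R = Ideal.span {t} ⊔ maximalIdeal R ^ 2) :
    maximalIdeal R = Ideal.span {t} := by
  refine le_antisymm ?_ (by rw [h]; exact le_sup_left)
  refine Submodule.le_of_le_smul_of_le_jacobson_bot (IsNoetherian.noetherian _)
    (IsLocalRing.maximalIdeal_le_jacobson ⊥) ?_
  rw [Ideal.smul_eq_mul, ← pow_two, ← h]

private lemma aux_two_le_card {I : Ideal R} (h : I ≠ ⊥) : 2 ≤ Nat.card ↥I := by
  rw [Nat.succ_le_iff, Nat.one_lt_iff_ne_zero_and_ne_one]
  refine ⟨Nat.card_pos.ne', fun h1 => h ?_⟩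
  ext x
  simp only [Submodule.mem_bot]
  constructor
  · intro hx
    obtain ⟨y, hy⟩ := Nat.card_eq_one_iff_exists.mp h1
    have h0 : (⟨0, I.zero_mem⟩ : I) = y := hy _
    have hx' : (⟨x, hx⟩ : I) = y := hy _
    simpa using (congrArg Subtype.val (h0.trans hx'.symm)).symm
  · rintro rfl; exact I.zero_mem

end Aux

theorem eq_zmod_of_unit_group {R : Type*} [CommRing R] [IsLocalRing R] [Finite R]
    (n : ℕ) (hn : 3 ≤ n) (hcard : Nat.card R = 2 ^ n)
    (hm : (IsLocalRing.maximalIdeal R) ^ (n - 1) ≠ ⊥)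
    (hU : Nonempty (Rˣ ≃* Multiplicative (Fin (n - 1) → ZMod 2))) :
    IsLocalRing.maximalIdeal R = Ideal.span {(2 : R)} ∧
      Nonempty (R ≃+* ZMod (2 ^ n)) := by
  classical
  obtain ⟨e⟩ := hU
  set m := maximalIdeal R with hmdef
  -- every unit squares to 1
  have hsq : ∀ u : Rˣ, u * u = 1 := by
    intro u
    apply e.injective
    rw [map_mul, map_one]
    have h : Multiplicative.toAdd (e u) + Multiplicative.toAdd (e u) = 0 :=
      funext fun i => CharTwo.add_self_eq_zero _
    rw [← ofAdd_toAdd (e u), ← ofAdd_add, h, ofAdd_zero]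
  -- (1+x)^2 = 1 for x ∈ m
  have hsq' : ∀ x ∈ m, (1 + x) * (1 + x) = 1 := by
    intro x hx
    have h1 := IsLocalRing.maximalIdeal_le_jacobson (⊥ : Ideal R) hx
    obtain ⟨u, hu⟩ := Ideal.isUnit_of_sub_one_mem_jacobson_bot (1 + x) (by simpa using h1)
    calc (1 + x) * (1 + x) = ((u * u : Rˣ) : R) := by rw [Units.val_mul, hu]
    _ = 1 := by rw [hsq u, Units.val_one]
  have hUcard : Nat.card Rˣ = 2 ^ (n - 1) := by
    rw [Nat.card_congr e.toEquiv]
    simp [Nat.card_eq_fintype_card]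
  have hmcard : Nat.card ↥m = 2 ^ (n - 1) := by
    have h := aux_card_m_add_units (R := R)
    rw [← hmdef] at h
    rw [hUcard, hcard] at h
    have hpow : 2 ^ n = 2 ^ (n - 1) + 2 ^ (n - 1) := by
      rw [← two_mul, ← pow_succ']
      congr 1
      omega
    omega
  have hne : ∀ i ≤ n - 1, m ^ i ≠ ⊥ := by
    intro i hi h0
    exact hm (le_bot_iff.mp (h0 ▸ Ideal.pow_le_pow_right hi))
  have hstrict : ∀ i ≤ n - 2, m ^ (i + 1) ≠ m ^ i := by
    intro i hi heq
    apply hne i (by omega)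
    refine Submodule.eq_bot_of_le_smul_of_le_jacobson_bot m (m ^ i)
      (IsNoetherian.noetherian _) ?_ (IsLocalRing.maximalIdeal_le_jacobson ⊥)
    rw [Ideal.smul_eq_mul, ← pow_succ', heq]
  have hchain : ∀ k ≤ n - 1,
      2 ^ k * Nat.card ↥(m ^ (n - 1)) ≤ Nat.card ↥(m ^ (n - 1 - k)) := by
    intro k
    induction k with
    | zero => intro _; simp
    | succ k ih =>
      intro hk
      have h1 := ih (by omega)
      have h4 : n - 1 - (k + 1) + 1 = n - 1 - k := by omega
      have h2 : 2 * Nat.card ↥(m ^ (n - 1 - k)) ≤ Nat.card ↥(m ^ (n - 1 - (k + 1))) :=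
        aux_double
          (by rw [← h4]; exact Ideal.pow_le_pow_right (by omega))
          (by rw [← h4]; exact hstrict _ (by omega))
      calc 2 ^ (k + 1) * Nat.card ↥(m ^ (n - 1)) = 2 * (2 ^ k * Nat.card ↥(m ^ (n - 1))) := by
            ring
      _ ≤ 2 * Nat.card ↥(m ^ (n - 1 - k)) := by omega
      _ ≤ _ := h2
  have hlast : 2 ≤ Nat.card ↥(m ^ (n - 1)) := aux_two_le_card (hne _ le_rfl)
  have hm2card : Nat.card ↥(m ^ 2) = 2 ^ (n - 2) := by
    have hub : 2 * Nat.card ↥(m ^ 2) ≤ 2 ^ (n - 1) := by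
      have h := aux_double (I := m ^ 2) (J := m ^ 1) (Ideal.pow_le_pow_right (by omega))
        (hstrict 1 (by omega))
      rwa [pow_one, hmcard] at h
    have hlb : 2 ^ (n - 2) ≤ Nat.card ↥(m ^ 2) := by
      have h := hchain (n - 3) (by omega)
      have heq : n - 1 - (n - 3) = 2 := by omega
      rw [heq] at h
      calc 2 ^ (n - 2) = 2 ^ (n - 3) * 2 := by rw [← pow_succ]; congr 1; omega
      _ ≤ 2 ^ (n - 3) * Nat.card ↥(m ^ (n - 1)) := Nat.mul_le_mul_left _ hlast
      _ ≤ _ := h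
    have h2 : 2 ^ (n - 1) = 2 * 2 ^ (n - 2) := by rw [← pow_succ']; congr 1; omega
    omega
  -- key lemma
  have hkey : ∀ t : R, t ∈ m → t ∉ m ^ 2 → m = Ideal.span {t} := by
    intro t ht ht2
    apply aux_span_of_sup
    have hle : Ideal.span {t} ⊔ m ^ 2 ≤ m :=
      sup_le ((Ideal.span_singleton_le_iff_mem m).mpr ht) (Ideal.pow_le_self two_ne_zero)
    have hneq : m ^ 2 ≠ Ideal.span {t} ⊔ m ^ 2 := by
      intro hq
      exact ht2 (hq ▸ le_sup_left (a := Ideal.span {t}) (Ideal.subset_span rfl))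
    have hd := aux_double (I := m ^ 2) (J := Ideal.span {t} ⊔ m ^ 2) le_sup_right hneq
    rw [hm2card] at hd
    have h2 : 2 * 2 ^ (n - 2) = 2 ^ (n - 1) := by rw [← pow_succ']; congr 1; omega
    rw [h2] at hd
    exact (aux_ideal_eq_of_le_of_card_le hle (by rw [hmcard]; exact hd)).symm
  -- exists t ∈ m \ m^2
  have hm2lt : m ^ 2 < m := by
    refine lt_of_le_of_ne (Ideal.pow_le_self two_ne_zero) ?_
    intro hq
    have h := hstrict 1 (by omega)
    rw [pow_one] at h
    exact h hq
  obtain ⟨t, ht, ht2⟩ := SetLike.exists_of_lt hm2lt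
  have hmt : m = Ideal.span {t} := hkey t ht ht2
  have htsq : t * t = -(2 * t) := by
    have h := hsq' t ht
    linear_combination h
  -- (2^n : R) = 0
  have hcast : ((2 ^ n : ℕ) : R) = 0 := by
    have h : (Nat.card R) • (1 : R) = 0 := card_nsmul_eq_zero'
    rwa [hcard, nsmul_eq_mul, mul_one] at h
  -- 2 ∈ m
  have h2m : (2 : R) ∈ m := by
    by_contra h2u
    have hu : IsUnit (2 : R) := by
      by_contra hnu
      exact h2u ((IsLocalRing.mem_maximalIdeal _).mpr hnu)
    obtain ⟨u, hu⟩ := hu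
    have h4 : (4 : R) = 1 := by
      calc (4 : R) = (u : R) * u := by rw [hu]; norm_num
      _ = ((u * u : Rˣ) : R) := by rw [Units.val_mul]
      _ = 1 := by rw [hsq u, Units.val_one]
    have h3 : ((3 : ℕ) : R) = 0 := by push_cast; linear_combination h4
    have hd3 : ringChar R ∣ 3 := ringChar.dvd h3
    have hd2 : ringChar R ∣ 2 ^ n := ringChar.dvd hcast
    have hcop : Nat.Coprime 3 (2 ^ n) := Nat.Coprime.pow_right n (by decide)
    have : ringChar R = 1 := Nat.eq_one_of_dvd_coprimes hcop hd3 hd2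
    exact CharP.ringChar_ne_one this
  -- 2 ∉ m^2
  have h2nm : (2 : R) ∉ m ^ 2 := by
    intro h22
    have h2t : 2 * t ∈ m ^ 3 := by
      have := Ideal.mul_mem_mul h22 ht
      rwa [← pow_succ] at this
    have htt : t * t ∈ m ^ 3 := by
      rw [htsq]
      exact neg_mem h2t
    have hle : m ^ 2 ≤ m ^ 3 := by
      rw [hmt, Ideal.span_singleton_pow, sq]
      exact (Ideal.span_singleton_le_iff_mem _).mpr (by rwa [← hmt])
    have hbot : m ^ 2 = ⊥ := by
      refine Submodule.eq_bot_of_le_smul_of_le_jacobson_bot m (m ^ 2)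
        (IsNoetherian.noetherian _) ?_ (IsLocalRing.maximalIdeal_le_jacobson ⊥)
      rw [Ideal.smul_eq_mul, ← pow_succ']
      exact hle.trans (le_of_eq (by ring))
    apply hne 2 (by omega) hbot
  -- m = (2)
  have hm2 : m = Ideal.span {(2 : R)} := hkey 2 h2m h2nm
  refine ⟨hm2, ?_⟩
  -- characteristic
  have h2pow : ((2 ^ (n - 1) : ℕ) : R) ≠ 0 := by
    have hspan : m ^ (n - 1) = Ideal.span {(2 : R) ^ (n - 1)} := by
      rw [hm2, Ideal.span_singleton_pow]
    have h := hm
    rw [hspan, Ne, Ideal.span_singleton_eq_bot] at h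
    push_cast
    exact h
  have hchar : ringChar R = 2 ^ n := by
    obtain ⟨k, hk, hkc⟩ := (Nat.dvd_prime_pow Nat.prime_two).mp (ringChar.dvd hcast)
    rcases Nat.lt_or_ge k n with hkn | hkn
    · exfalso
      apply h2pow
      have : CharP R (ringChar R) := ringChar.charP R
      rw [CharP.cast_eq_zero_iff R (ringChar R), hkc]
      exact pow_dvd_pow 2 (by omega)
    · rw [hkc]; congr 1; omega
  have : CharP R (2 ^ n) := ringChar.of_eq hchar
  have : Fintype R := Fintype.ofFinite R
  have hfc : Fintype.card R = 2 ^ n := by rw [← Nat.card_eq_fintype_card, hcard]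
  exact ⟨(ZMod.ringEquiv R hfc).symm⟩
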